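/- Let a, p be real, R > 0, and let h : ℂ → ℂ satisfy A(z)h(z)^3 − 3B_2(z)h(z) − 2B_1(z) = 0 for all |z| > R. Suppose that, as |z| → ∞ along the cobounded filter, z·h(z) → −1 and z·(z·h(z)+1) → α for some complex number α. Then 3α^2 = 1 + a^2 − 3p^2. -/

import Mathlib

open Complex Filter

/-- `A(z) = (z²-1)(z²-a²)`. -/
noncomputable def polyA (a : ℝ) (z : ℂ) : ℂ := (z ^ 2 - 1) * (z ^ 2 - (a : ℂ) ^ 2)

/-- `B₂(z) = z²-p²`. -/
noncomputable def polyB2 (p : ℝ) (z : ℂ) : ℂ := z ^ 2 - (p : ℂ) ^ 2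

/-- `B₁(z) = z`. -/
noncomputable def polyB1 (z : ℂ) : ℂ := z

/-- If `h` solves `A h³ − 3B₂ h − 2B₁ = 0` for `|z| > R` and has the expansion
`h(z) = −1/z + α/z² + ⋯` at infinity, then `3α² = 1 + a² − 3p²`. -/
theorem second_coefficient_at_infinity (a p R : ℝ) (hR : 0 < R) (h : ℂ → ℂ) (α : ℂ)
    (heq : ∀ z : ℂ, R < ‖z‖ →
      polyA a z * (h z) ^ 3 - 3 * polyB2 p z * h z - 2 * polyB1 z = 0)
    (hlim1 : Tendsto (fun z : ℂ => z * h z) (Bornology.cobounded ℂ) (nhds (-1)))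
    (hlim2 : Tendsto (fun z : ℂ => z * (z * h z + 1)) (Bornology.cobounded ℂ) (nhds α)) :
    3 * α ^ 2 = 1 + (a : ℂ) ^ 2 - 3 * (p : ℂ) ^ 2 := by
  set C : ℂ := 1 + (a : ℂ) ^ 2 - 3 * (p : ℂ) ^ 2 with hC
  set w : ℂ → ℂ := fun z => z * (z * h z + 1) with hw
  set g : ℂ → ℂ := fun z =>
    -3 * (w z) ^ 2 + C
      + ((w z) ^ 3 - 3 * (1 + (a : ℂ) ^ 2) * w z + 3 * (p : ℂ) ^ 2 * w z) / z
      + (3 * (1 + (a : ℂ) ^ 2) * (w z) ^ 2 - (a : ℂ) ^ 2) / z ^ 2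
      + (-(1 + (a : ℂ) ^ 2) * (w z) ^ 3 + 3 * (a : ℂ) ^ 2 * w z) / z ^ 3
      + (-3 * (a : ℂ) ^ 2 * (w z) ^ 2) / z ^ 4
      + ((a : ℂ) ^ 2 * (w z) ^ 3) / z ^ 5 with hg
  have hev : ∀ᶠ z : ℂ in Bornology.cobounded ℂ, R < ‖z‖ := by
    have := tendsto_norm_cobounded_atTop (E := ℂ) |>.eventually (eventually_gt_atTop R)
    simpa using this
  have hgf : ∀ᶠ z : ℂ in Bornology.cobounded ℂ, g z = 0 := by
    filter_upwards [hev] with z hz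
    have hz0 : z ≠ 0 := by
      intro h0
      simp [h0] at hz; linarith
    have e := heq z hz
    simp only [polyA, polyB2, polyB1] at e
    have : g z = ((z ^ 2 - 1) * (z ^ 2 - (a:ℂ) ^ 2) * (h z) ^ 3
        - 3 * (z ^ 2 - (p:ℂ) ^ 2) * h z - 2 * z) * z := by
      simp only [hg, hw, hC]
      have h15 : (z : ℂ) ^ 15 * z⁻¹ ^ 15 = 1 := by
        rw [← mul_pow, mul_inv_cancel₀ hz0, one_pow]
      field_simp [hz0]
      ring
    rw [this, e, zero_mul]
  have hinv : Tendsto (fun z : ℂ => z⁻¹) (Bornology.cobounded ℂ) (nhds 0) :=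
    tendsto_inv₀_cobounded
  have hglim : Tendsto g (Bornology.cobounded ℂ) (nhds (-3 * α ^ 2 + C)) := by
    have : Tendsto g (Bornology.cobounded ℂ) (nhds
        (-3 * α ^ 2 + C
          + (α ^ 3 - 3 * (1 + (a : ℂ) ^ 2) * α + 3 * (p : ℂ) ^ 2 * α) * 0
          + (3 * (1 + (a : ℂ) ^ 2) * α ^ 2 - (a : ℂ) ^ 2) * 0 ^ 2
          + (-(1 + (a : ℂ) ^ 2) * α ^ 3 + 3 * (a : ℂ) ^ 2 * α) * 0 ^ 3
          + (-3 * (a : ℂ) ^ 2 * α ^ 2) * 0 ^ 4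
          + ((a : ℂ) ^ 2 * α ^ 3) * 0 ^ 5)) := by
      simp only [hg, div_eq_mul_inv, ← inv_pow]
      apply Tendsto.add
      apply Tendsto.add
      apply Tendsto.add
      apply Tendsto.add
      apply Tendsto.add
      · exact ((tendsto_const_nhds (x := (-3:ℂ))).mul (hlim2.pow 2)).add tendsto_const_nhds
      · exact (((hlim2.pow 3).sub ((tendsto_const_nhds).mul hlim2)).add
          ((tendsto_const_nhds).mul hlim2)).mul hinv
      · exact (((tendsto_const_nhds).mul (hlim2.pow 2)).sub tendsto_const_nhds).mul (hinv.pow 2)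
      · exact (((tendsto_const_nhds).mul (hlim2.pow 3)).add
          ((tendsto_const_nhds).mul hlim2)).mul (hinv.pow 3)
      · exact ((tendsto_const_nhds).mul (hlim2.pow 2)).mul (hinv.pow 4)
      · exact ((tendsto_const_nhds).mul (hlim2.pow 3)).mul (hinv.pow 5)
    simpa using this
  have h0 : Tendsto g (Bornology.cobounded ℂ) (nhds 0) :=
    Tendsto.congr' (hgf.mono fun z hz => hz.symm) tendsto_const_nhds
  have := tendsto_nhds_unique hglim h0
  linear_combination -this
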